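/- Let a, β₁, α₃ ∈ ℂ, let k, ℓ be non-negative integers, and let (bₙ)ₙ≥₋₁ and (cₙ)ₙ≥₋₁ be sequences of complex numbers with b₋₁ = c₋₁ = 0, bₙ = 0 for 0 ≤ n < k, cₙ = 0 for 0 ≤ n < ℓ, b_k ≠ 0 and c_ℓ ≠ 0, satisfying for all n ≥ 0 the recursions (a + (n+3)β₁)cₙ + (n+2)α₃ c_{n−1} = 0 and (2a + (n+4)β₁)bₙ + (n+2)α₃ b_{n−1} = 0. If k ≠ 2ℓ + 2, then a = β₁ = α₃ = 0. -/
import Mathlib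


/-- If the Taylor coefficients `bₙ`, `cₙ` of `f₀`, `f₁` (with lowest nonvanishing
coefficients `b_k ≠ 0`, `c_ℓ ≠ 0`) satisfy the recursions
`(a + (n+3)β₁)cₙ + (n+2)α₃ c_{n−1} = 0` and `(2a + (n+4)β₁)bₙ + (n+2)α₃ b_{n−1} = 0`
for all `n ≥ 0` (with `b₋₁ = c₋₁ = 0`), and `k ≠ 2ℓ + 2`, then `a = β₁ = α₃ = 0`. -/
theorem only_shear_symmetry_unless_k_eq_two_ell_add_two
    (a β₁ α₃ : ℂ) (k ℓ : ℕ) (b c : ℕ → ℂ)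
    (hbk0 : ∀ n < k, b n = 0) (hcl0 : ∀ n < ℓ, c n = 0)
    (hbk : b k ≠ 0) (hcl : c ℓ ≠ 0)
    (hrec_c : ∀ n : ℕ, (a + ((n : ℂ) + 3) * β₁) * c n
      + ((n : ℂ) + 2) * α₃ * (if n = 0 then 0 else c (n - 1)) = 0)
    (hrec_b : ∀ n : ℕ, (2 * a + ((n : ℂ) + 4) * β₁) * b n
      + ((n : ℂ) + 2) * α₃ * (if n = 0 then 0 else b (n - 1)) = 0)
    (hk : k ≠ 2 * ℓ + 2) :
    a = 0 ∧ β₁ = 0 ∧ α₃ = 0 := by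
  -- Step 1: n = ℓ in the c-recursion gives a + (ℓ+3)β₁ = 0
  have h1 : a + ((ℓ : ℂ) + 3) * β₁ = 0 := by
    have h := hrec_c ℓ
    have hprev : (if ℓ = 0 then (0 : ℂ) else c (ℓ - 1)) = 0 := by
      rcases Nat.eq_zero_or_pos ℓ with h0 | h0
      · simp [h0]
      · rw [if_neg (Nat.pos_iff_ne_zero.mp h0)]
        exact hcl0 _ (Nat.sub_lt h0 one_pos)
    rw [hprev, mul_zero, add_zero, mul_eq_zero] at h
    exact h.resolve_right hcl
  -- Step 2: n = k in the b-recursion gives 2a + (k+4)β₁ = 0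
  have h2 : 2 * a + ((k : ℂ) + 4) * β₁ = 0 := by
    have h := hrec_b k
    have hprev : (if k = 0 then (0 : ℂ) else b (k - 1)) = 0 := by
      rcases Nat.eq_zero_or_pos k with h0 | h0
      · simp [h0]
      · rw [if_neg (Nat.pos_iff_ne_zero.mp h0)]
        exact hbk0 _ (Nat.sub_lt h0 one_pos)
    rw [hprev, mul_zero, add_zero, mul_eq_zero] at h
    exact h.resolve_right hbk
  -- Derive β₁ = 0
  have hkc : (k : ℂ) ≠ 2 * (ℓ : ℂ) + 2 := by
    intro h
    apply hk
    have : ((k : ℂ)) = ((2 * ℓ + 2 : ℕ) : ℂ) := by push_cast; linear_combination h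
    exact_mod_cast this
  have hβ : β₁ = 0 := by
    have hd : ((k : ℂ) - 2 * ℓ - 2) * β₁ = 0 := by ring_nf; linear_combination h2 - 2 * h1
    rcases mul_eq_zero.mp hd with h | h
    · exact absurd (by linear_combination h) hkc
    · exact h
  have ha : a = 0 := by
    rw [hβ] at h1; simpa using h1
  refine ⟨ha, hβ, ?_⟩
  -- Step 3: n = ℓ+1 in the c-recursion gives (ℓ+3)α₃ c_ℓ = 0
  have h := hrec_c (ℓ + 1)
  rw [if_neg (Nat.succ_ne_zero ℓ)] at h
  simp only [Nat.add_sub_cancel] at h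
  rw [ha, hβ] at h
  push_cast at h
  have h3 : ((ℓ : ℂ) + 3) * α₃ * c ℓ = 0 := by linear_combination h
  have hl3 : ((ℓ : ℂ) + 3) ≠ 0 := by
    have : (((ℓ + 3 : ℕ)) : ℂ) ≠ 0 := Nat.cast_ne_zero.mpr (by omega)
    push_cast at this
    exact this
  rcases mul_eq_zero.mp h3 with h | h
  · exact (mul_eq_zero.mp h).resolve_left hl3
  · exact absurd h hcl
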